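/- arXiv:2102.05475 — 2 statements merged into one kernel-verified Lean document; each statement's English description precedes it below -/
import Mathlib

section
/- There exists a universal constant C > 0 such that the following holds. Let X be a measurable space, H a countable class of measurable functions X → {−1,+1} of VC dimension at most d, D a probability measure on X, g ∈ H, ε ∈ (0,1) (the clip parameter), i ≥ 2, and h₁,…,h_{i−1} : X → {−1,+1} measurable functions with D({x : Maj(h₁,…,h_{i−1})(x) ≠ g(x)}) > 0. For every δ ∈ (0,1), if m ≥ C·(d + log(1/δ)), then with probability at least 1 − δ over an i.i.d. sample (x₁,…,x_m) drawn from the conditional distribution D|_{Maj(h₁,…,h_{i−1}) ≠ g}, every h ∈ H satisfying h(x_j) = g(x_j) for all j ∈ {1,…,m} also satisfies D({x : Maj(h₁,…,h_{i−1})(x) ≠ g(x) and h(x) ≠ g(x)}) ≤ (1/16) · D({x : Maj(h₁,…,h_{i−1})(x) ≠ g(x)}). -/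
open MeasureTheory ProbabilityTheory
open scoped ENNReal

/-- `B_ε := 2⌈log₂(1/ε)⌉ + 1`. -/
noncomputable def Bval (ε : ℝ) : ℤ := 2 * ⌈Real.logb 2 (1 / ε)⌉ + 1

/-- `clip_ε(x) := min(max(-B_ε, x), B_ε)`. -/
noncomputable def clip (ε : ℝ) (x : ℤ) : ℤ := min (max (-(Bval ε)) x) (Bval ε)

/-- `Vote(h₁,…,h_n)(x)`, defined recursively by `Vote(h₁)(x) = h₁(x)` and
`Vote(h₁,…,h_n)(x) = clip_ε(Vote(h₁,…,h_{n-1})(x) + 2 hₙ(x))`.  (The value at `n = 0` is a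
junk value, never used.) -/
noncomputable def VoteSeq (ε : ℝ) {X : Type*} (h : ℕ → X → ℤ) : ℕ → X → ℤ
  | 0 => fun _ => 0
  | 1 => fun x => h 1 x
  | n + 2 => fun x => clip ε (VoteSeq ε h (n + 1) x + 2 * h (n + 2) x)

/-- `Vote_g(h₁,…,h_n)(x)`, defined recursively by `Vote_g(h₁)(x) = -1` if `h₁(x) = g(x)` and
`+1` otherwise, and `Vote_g(h₁,…,h_n)(x) = clip_ε(Vote_g(h₁,…,h_{n-1})(x) + 2 sₙ(x))` where
`sₙ(x) = -1` if `hₙ(x) = g(x)` and `+1` otherwise. -/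
noncomputable def VoteGSeq (ε : ℝ) {X : Type*} (h : ℕ → X → ℤ) (g : X → ℤ) : ℕ → X → ℤ
  | 0 => fun _ => 0
  | 1 => fun x => if h 1 x = g x then -1 else 1
  | n + 2 => fun x =>
      clip ε (VoteGSeq ε h g (n + 1) x + 2 * (if h (n + 2) x = g x then -1 else 1))

/-- `Maj(h₁,…,h_n)(x) := +1` if `Vote(h₁,…,h_n)(x) ≥ 0`, and `-1` otherwise. -/
noncomputable def MajSeq (ε : ℝ) {X : Type*} (h : ℕ → X → ℤ) (n : ℕ) (x : X) : ℤ :=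
  if 0 ≤ VoteSeq ε h n x then 1 else -1

/-- `H` has VC dimension at most `d`: every finite set shattered by `H` (viewing elements of
`H` as `±1`-valued functions) has cardinality at most `d`. -/
def VCDimLE {X : Type*} (H : Set (X → ℤ)) (d : ℕ) : Prop :=
  ∀ S : Finset X,
    (∀ σ : X → Bool, ∃ h ∈ H, ∀ x ∈ S, h x = (if σ x then 1 else -1)) → S.card ≤ d


namespace Stmt7Aux
open Finset
open scoped Classical

variable {α : Type*} [MeasurableSpace α]

lemma mp_eval {m : ℕ} (μ : Measure α) [IsProbabilityMeasure μ] (j : Fin m) :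
    MeasurePreserving (fun y : Fin m → α => y j) (Measure.pi fun _ => μ) μ := by
  refine ⟨measurable_pi_apply j, ?_⟩
  ext s hs
  rw [Measure.map_apply (measurable_pi_apply j) hs]
  have h1 : (fun y : Fin m → α => y j) ⁻¹' s
      = Set.univ.pi (Function.update (fun _ => Set.univ) j s) := Set.eval_preimage
  rw [h1, Measure.pi_pi]
  rw [Finset.prod_eq_single j (fun i _ hij => by simp [Function.update_of_ne hij])
    (fun h => absurd (mem_univ j) h)]
  simp

lemma indep_eval {m : ℕ} (μ : Measure α) [IsProbabilityMeasure μ] {i j : Fin m} (hij : i ≠ j) :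
    IndepFun (fun y : Fin m → α => y i) (fun y => y j) (Measure.pi fun _ => μ) := by
  rw [indepFun_iff_measure_inter_preimage_eq_mul]
  intro s t hs ht
  rw [(mp_eval μ i).measure_preimage hs.nullMeasurableSet,
    (mp_eval μ j).measure_preimage ht.nullMeasurableSet]
  have h1 : (fun y : Fin m → α => y i) ⁻¹' s ∩ (fun y : Fin m → α => y j) ⁻¹' t
      = Set.univ.pi (Function.update (Function.update (fun _ => Set.univ) i s) j t) := by
    ext y
    simp only [Set.mem_inter_iff, Set.mem_preimage, Set.mem_pi, Set.mem_univ, true_implies]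
    constructor
    · rintro ⟨h1, h2⟩ k
      rcases eq_or_ne k j with rfl | hkj
      · simpa [Function.update_self]
      rcases eq_or_ne k i with rfl | hki
      · simpa [Function.update_of_ne hkj, Function.update_self]
      · simp [Function.update_of_ne hkj, Function.update_of_ne hki]
    · intro h
      refine ⟨?_, ?_⟩
      · have := h i
        simpa [Function.update_of_ne hij, Function.update_self] using this
      · have := h j
        simpa [Function.update_self] using this
  rw [h1, Measure.pi_pi]
  rw [← Finset.mul_prod_erase Finset.univ _ (mem_univ i),
    ← Finset.mul_prod_erase _ _ (Finset.mem_erase.2 ⟨hij.symm, mem_univ j⟩)]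
  rw [Finset.prod_eq_one (fun k hk => by
    simp only [Finset.mem_erase] at hk
    simp [Function.update_of_ne hk.1, Function.update_of_ne hk.2.1])]
  simp [Function.update_of_ne hij, Function.update_self, mul_comm]

lemma count_lemma (μ : Measure α) [IsProbabilityMeasure μ] {A : Set α} (hA : MeasurableSet A)
    (hp : (1 : ℝ≥0∞)/16 < μ A) {m k : ℕ} (hm : 2048 ≤ m) (hk : k ≤ m/32 + 1) :
    (1/2 : ℝ≥0∞) ≤ Measure.pi (fun _ : Fin m => μ)
      {y | k ≤ (univ.filter fun j => y j ∈ A).card} := by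
  set P := Measure.pi (fun _ : Fin m => μ) with hP
  haveI : IsProbabilityMeasure P := by rw [hP]; infer_instance
  set p : ℝ := (μ A).toReal with hpdef
  have hμA1 : μ A ≤ 1 := prob_le_one
  have hμAtop : μ A ≠ ⊤ := measure_ne_top _ _
  have hp16 : (1:ℝ)/16 < p := by
    rw [hpdef]
    have := ENNReal.toReal_strict_mono hμAtop hp
    simpa using this
  have hp1 : p ≤ 1 := by
    rw [hpdef]
    simpa using ENNReal.toReal_mono ENNReal.one_ne_top hμA1
  -- indicator functions
  set f : Fin m → (Fin m → α) → ℝ := fun j y => A.indicator (1 : α → ℝ) (y j) with hf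
  have hindmeas : Measurable (A.indicator (1 : α → ℝ)) := measurable_const.indicator hA
  have hfmeas : ∀ j, Measurable (f j) := fun j => hindmeas.comp (measurable_pi_apply j)
  have hfbdd : ∀ j y, ‖f j y‖ ≤ 1 := by
    intro j y
    rw [hf]
    by_cases h : y j ∈ A <;> simp [Set.indicator_apply, h]
  have hfL2 : ∀ j, MemLp (f j) 2 P := fun j =>
    MemLp.of_bound (hfmeas j).aestronglyMeasurable 1 (Filter.Eventually.of_forall (hfbdd j))
  -- expectation
  have hEf : ∀ j, ∫ y, f j y ∂P = p := by
    intro j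
    have h1 : ∫ y, f j y ∂P = ∫ a, A.indicator (1 : α → ℝ) a ∂μ := by
      rw [hf]
      rw [← (mp_eval μ j).map_eq, integral_map (measurable_pi_apply j).aemeasurable
        hindmeas.aestronglyMeasurable]
    rw [h1, integral_indicator_one hA]; rfl
  have hsq : ∀ j, (f j) ^ 2 = f j := by
    intro j
    funext y
    simp only [Pi.pow_apply, hf, Set.indicator_apply]
    by_cases h : y j ∈ A <;> simp [h]
  have hVarf : ∀ j, variance (f j) P = p - p^2 := by
    intro j
    rw [variance_eq_sub (hfL2 j), hsq j, hEf j]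
  -- the sum
  set S : (Fin m → α) → ℝ := fun y => ∑ j : Fin m, f j y with hS
  have hSmeas : Measurable S := by
    rw [hS]; exact Finset.measurable_sum _ fun j _ => hfmeas j
  have hSsum : S = ∑ j : Fin m, f j := by funext y; simp [hS]
  have hSL2 : MemLp S 2 P := by rw [hSsum]; exact memLp_finset_sum' _ fun j _ => hfL2 j
  have hES : ∫ y, S y ∂P = m * p := by
    rw [hS]
    rw [integral_finset_sum _ fun j _ => (hfL2 j).integrable (by norm_num)]
    simp [hEf]
  have hVarS : variance S P = m * (p - p^2) := by
    rw [hSsum, IndepFun.variance_sum (fun j _ => hfL2 j)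
      (fun i _ j _ hij => (indep_eval μ hij).comp hindmeas hindmeas)]
    simp [hVarf]; ring
  -- count equals S
  have hcount : ∀ y, ((univ.filter fun j => y j ∈ A).card : ℝ) = S y := by
    intro y
    rw [hS, Finset.card_filter]
    push_cast
    refine Finset.sum_congr rfl fun j _ => ?_
    by_cases h : y j ∈ A <;> simp [hf, Set.indicator_apply, h]
  -- Chebyshev
  have hmpos : (0:ℝ) < m := by positivity
  have hc : (0:ℝ) < m/32 := by positivity
  have hcheb := meas_ge_le_variance_div_sq (μ := P) hSL2 hc
  -- event inclusion
  have hincl : {y : Fin m → α | ¬ (k ≤ (univ.filter fun j => y j ∈ A).card)}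
      ⊆ {y | (m:ℝ)/32 ≤ |S y - ∫ z, S z ∂P|} := by
    intro y hy
    simp only [Set.mem_setOf_eq, not_le] at hy ⊢
    have h1 : S y ≤ (k:ℝ) - 1 := by
      rw [← hcount y]
      have : (univ.filter fun j => y j ∈ A).card ≤ k - 1 := Nat.le_sub_one_of_lt hy
      have hk1 : 1 ≤ k := by
        rcases Nat.eq_zero_or_pos k with rfl | h
        · omega
        · exact h
      calc ((univ.filter fun j => y j ∈ A).card : ℝ) ≤ ((k - 1 : ℕ) : ℝ) := by exact_mod_cast this
        _ = (k:ℝ) - 1 := by push_cast [hk1]; ring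
    have hkb : (k:ℝ) ≤ (m:ℝ)/32 + 1 := by
      calc (k:ℝ) ≤ ((m/32 + 1 : ℕ) : ℝ) := by exact_mod_cast hk
        _ ≤ (m:ℝ)/32 + 1 := by
            push_cast
            have : ((m/32 : ℕ) : ℝ) ≤ (m:ℝ)/32 := by
              rw [le_div_iff₀ (by norm_num : (0:ℝ) < 32)]
              exact_mod_cast Nat.div_mul_le_self m 32
            linarith
    rw [hES]
    have h2 : S y ≤ (m:ℝ)/32 := by linarith
    have h3 : (m:ℝ)/16 ≤ m * p := by
      rw [div_le_iff₀ (by norm_num : (0:ℝ) < 16)]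
      nlinarith
    rw [abs_sub_comm, le_abs]
    left
    linarith
  have hbound : P {y : Fin m → α | ¬ (k ≤ (univ.filter fun j => y j ∈ A).card)}
      ≤ ENNReal.ofReal (1/2) := by
    refine le_trans (measure_mono hincl) (le_trans hcheb ?_)
    apply ENNReal.ofReal_le_ofReal
    rw [hVarS]
    have h1 : m * (p - p^2) ≤ (m:ℝ)/4 := by nlinarith [sq_nonneg (p - 1/2), hmpos.le]
    have h2 : ((m:ℝ)/32)^2 = m^2/1024 := by ring
    rw [h2, div_le_iff₀ (by positivity)]
    have hm' : (2048:ℝ) ≤ m := by exact_mod_cast hm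
    calc m * (p - p^2) ≤ (m:ℝ)/4 := h1
      _ ≤ 1/2 * (m^2/1024) := by nlinarith
  -- complement
  have hmeasset : MeasurableSet {y : Fin m → α | ¬ (k ≤ (univ.filter fun j => y j ∈ A).card)} := by
    have : {y : Fin m → α | ¬ (k ≤ (univ.filter fun j => y j ∈ A).card)}
        = S ⁻¹' (Set.Iio (k:ℝ)) := by
      ext y
      simp only [Set.mem_setOf_eq, not_le, Set.mem_preimage, Set.mem_Iio, ← hcount y]
      exact_mod_cast Iff.rfl
    rw [this]
    exact hSmeas measurableSet_Iio
  have hcompl : {y : Fin m → α | k ≤ (univ.filter fun j => y j ∈ A).card}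
      = {y : Fin m → α | ¬ (k ≤ (univ.filter fun j => y j ∈ A).card)}ᶜ := by
    ext y; simp
  rw [hcompl, prob_compl_eq_one_sub hmeasset]
  have hhalf : ENNReal.ofReal (1/2) = (1/2 : ℝ≥0∞) := by
    rw [ENNReal.ofReal_div_of_pos (by norm_num)]
    norm_num
  calc (1/2 : ℝ≥0∞) = 1 - 1/2 := by
        rw [ENNReal.sub_half ENNReal.one_ne_top]
    _ ≤ 1 - P {y : Fin m → α | ¬ (k ≤ (univ.filter fun j => y j ∈ A).card)} := by
        apply tsub_le_tsub_left
        rw [← hhalf] at *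
        exact hbound

lemma card_cylinder {m : ℕ} (T : Finset (Fin m)) (c : Fin m → Bool) :
    (univ.filter fun σ : Fin m → Bool => ∀ j ∈ T, σ j = c j).card = 2 ^ (m - T.card) := by
  classical
  have h := Finset.card_bij'
      (s := univ.filter fun σ : Fin m → Bool => ∀ j ∈ T, σ j = c j)
      (t := (univ : Finset ({j : Fin m // j ∉ T} → Bool)))
      (fun σ _ => fun j => σ j.1)
      (fun τ _ => fun j => if h : j ∈ T then c j else τ ⟨j, h⟩)
      (fun σ hσ => mem_univ _)
      (fun τ hτ => by
        rw [mem_filter]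
        exact ⟨mem_univ _, fun j hj => by simp [hj]⟩)
      (fun σ hσ => by
        funext j
        by_cases hj : j ∈ T
        · rw [mem_filter] at hσ
          simp [hj, (hσ.2 j hj)]
        · simp [hj])
      (fun τ hτ => by
        funext j
        simp [j.2])
  rw [h, Finset.card_univ, Fintype.card_fun, Fintype.card_subtype_compl]
  simp [Fintype.card_coe]

lemma swap_count {m k : ℕ} (U V : Fin m → Bool) :
    (univ.filter fun σ : Fin m → Bool =>
        (∀ j, (if σ j = true then V j else U j) = false) ∧
          k ≤ (univ.filter fun j => (if σ j = true then U j else V j) = true).card).card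
      ≤ 2 ^ (m - k) := by
  classical
  set T : Finset (Fin m) := univ.filter (fun j => U j ≠ V j) with hT
  rcases Finset.eq_empty_or_nonempty (univ.filter fun σ : Fin m → Bool =>
        (∀ j, (if σ j = true then V j else U j) = false) ∧
          k ≤ (univ.filter fun j => (if σ j = true then U j else V j) = true).card)
      with he | ⟨σ0, hσ0⟩
  · rw [he]; simp
  · have key : ∀ σ : Fin m → Bool,
        ((∀ j, (if σ j = true then V j else U j) = false) ∧
          k ≤ (univ.filter fun j => (if σ j = true then U j else V j) = true).card) →
        (∀ j ∈ T, σ j = U j) ∧ k ≤ T.card := by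
      intro σ hσ
      have hset : (univ.filter fun j => (if σ j = true then U j else V j) = true) = T := by
        ext j
        simp only [mem_filter, mem_univ, true_and, hT]
        have h1 := hσ.1 j
        cases hσj : σ j <;> cases hUj : U j <;> cases hVj : V j <;> simp_all
      refine ⟨?_, by rw [← hset]; exact hσ.2⟩
      intro j hj
      rw [hT, mem_filter] at hj
      have h1 := hσ.1 j
      have hj2 := hj.2
      cases hσj : σ j <;> cases hUj : U j <;> cases hVj : V j <;> simp_all
    have hkT : k ≤ T.card := by
      rw [mem_filter] at hσ0
      exact (key σ0 hσ0.2).2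
    have hsub : (univ.filter fun σ : Fin m → Bool =>
        (∀ j, (if σ j = true then V j else U j) = false) ∧
          k ≤ (univ.filter fun j => (if σ j = true then U j else V j) = true).card)
        ⊆ univ.filter (fun σ => ∀ j ∈ T, σ j = U j) := by
      intro σ hσ
      rw [mem_filter] at hσ
      rw [mem_filter]
      exact ⟨mem_univ σ, (key σ hσ.2).1⟩
    calc _ ≤ (univ.filter fun σ : Fin m → Bool => ∀ j ∈ T, σ j = U j).card :=
          Finset.card_le_card hsub
      _ = 2 ^ (m - T.card) := card_cylinder T U
      _ ≤ 2 ^ (m - k) := Nat.pow_le_pow_right (by norm_num) (Nat.sub_le_sub_left hkT m)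

lemma trace_bound {X : Type*} {m d : ℕ} (𝒜 : Finset (Set X))
    (hVC : ∀ S : Finset X, (∀ T ⊆ S, ∃ A ∈ 𝒜, ∀ w ∈ S, w ∈ A ↔ w ∈ T) → S.card ≤ d)
    (x y : Fin m → X) :
    (𝒜.image fun A => (fun j => (decide (x j ∈ A), decide (y j ∈ A)) : Fin m → Bool × Bool)).card
      ≤ ∑ i ∈ Iic d, (2*m).choose i := by
  classical
  set pt : Fin m ⊕ Fin m → X := Sum.elim x y with hpt
  set tr : Set X → Finset (Fin m ⊕ Fin m) := fun A => univ.filter (fun z => pt z ∈ A) with htr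
  set 𝒯 : Finset (Finset (Fin m ⊕ Fin m)) := 𝒜.image tr with h𝒯
  have h1 : (𝒜.image fun A =>
      (fun j => (decide (x j ∈ A), decide (y j ∈ A)) : Fin m → Bool × Bool)).card ≤ 𝒯.card := by
    have heq : (𝒜.image fun A =>
        (fun j => (decide (x j ∈ A), decide (y j ∈ A)) : Fin m → Bool × Bool))
        = 𝒯.image (fun s =>
            (fun j => (decide (Sum.inl j ∈ s), decide (Sum.inr j ∈ s)) : Fin m → Bool × Bool)) := by
      rw [h𝒯, Finset.image_image]
      refine Finset.image_congr ?_
      intro A hA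
      funext j
      simp only [Function.comp_apply]
      refine congrArg₂ Prod.mk ?_ ?_ <;> rw [decide_eq_decide] <;> simp [htr, hpt]
    rw [heq]
    exact Finset.card_image_le
  have h2 : 𝒯.card ≤ 𝒯.shatterer.card := Finset.card_le_card_shatterer 𝒯
  have h3 : ∀ s ∈ 𝒯.shatterer, s.card ≤ d := by
    intro s hs
    rw [Finset.mem_shatterer] at hs
    have hinj : Set.InjOn pt ↑s := by
      intro z1 hz1 z2 hz2 heq
      by_contra hne
      obtain ⟨u, hu𝒯, hsu⟩ := hs (t := {z1}) (by simpa using hz1)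
      rw [h𝒯, Finset.mem_image] at hu𝒯
      obtain ⟨A, hA, rfl⟩ := hu𝒯
      have hz1u : z1 ∈ s ∩ tr A := by rw [hsu]; simp
      have hz2u : z2 ∈ s ∩ tr A := by
        rw [Finset.mem_inter] at hz1u ⊢
        refine ⟨hz2, ?_⟩
        have hz1A : pt z1 ∈ A := by
          have := hz1u.2
          rw [htr] at this
          simpa using this
        rw [htr]
        simp only [Finset.mem_filter]
        exact ⟨Finset.mem_univ _, by rw [← heq]; exact hz1A⟩
      rw [hsu] at hz2u
      simp at hz2u
      exact hne hz2u.symm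
    have hScard : (s.image pt).card = s.card := Finset.card_image_of_injOn hinj
    have hSprem : ∀ T ⊆ s.image pt, ∃ A ∈ 𝒜, ∀ w ∈ s.image pt, w ∈ A ↔ w ∈ T := by
      intro T hT
      obtain ⟨u, hu, hsu⟩ := hs (t := s.filter (fun z => pt z ∈ T)) (Finset.filter_subset _ _)
      rw [h𝒯, Finset.mem_image] at hu
      obtain ⟨A, hA, rfl⟩ := hu
      refine ⟨A, hA, ?_⟩
      intro w hw
      rw [Finset.mem_image] at hw
      obtain ⟨z, hz, rfl⟩ := hw
      constructor
      · intro hzA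
        have hmem : z ∈ s ∩ tr A := Finset.mem_inter.2 ⟨hz, by
          rw [htr]; simp only [Finset.mem_filter]; exact ⟨Finset.mem_univ _, hzA⟩⟩
        rw [hsu, Finset.mem_filter] at hmem
        exact hmem.2
      · intro hzT
        have hmem : z ∈ s.filter (fun z => pt z ∈ T) := Finset.mem_filter.2 ⟨hz, hzT⟩
        rw [← hsu, Finset.mem_inter] at hmem
        have := hmem.2
        rw [htr] at this
        simpa using this
    have := hVC (s.image pt) hSprem
    omega
  have h4 : 𝒯.shatterer ⊆ (Iic d).biUnion (fun i => Finset.powersetCard i univ) := by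
    intro s hs
    rw [Finset.mem_biUnion]
    exact ⟨s.card, by simp [h3 s hs], Finset.mem_powersetCard_univ.2 rfl⟩
  calc (𝒜.image fun A =>
      (fun j => (decide (x j ∈ A), decide (y j ∈ A)) : Fin m → Bool × Bool)).card
      ≤ 𝒯.shatterer.card := le_trans h1 h2
    _ ≤ ((Iic d).biUnion (fun i => Finset.powersetCard i univ)).card := Finset.card_le_card h4
    _ ≤ ∑ i ∈ Iic d, (Finset.powersetCard i (univ : Finset (Fin m ⊕ Fin m))).card :=
        Finset.card_biUnion_le
    _ = ∑ i ∈ Iic d, (2*m).choose i := by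
        refine Finset.sum_congr rfl fun i _ => ?_
        rw [Finset.card_powersetCard, Finset.card_univ]
        congr 1
        simp
        omega

lemma mp_swap_pi {m : ℕ} (μ : Measure α) [IsProbabilityMeasure μ] (σ : Fin m → Bool) :
    MeasurePreserving
      (fun f : Fin m → α × α => fun j => if σ j = true then Prod.swap (f j) else f j)
      (Measure.pi fun _ : Fin m => μ.prod μ) (Measure.pi fun _ : Fin m => μ.prod μ) := by
  have hswap : MeasurePreserving (Prod.swap : α × α → α × α) (μ.prod μ) (μ.prod μ) :=
    ⟨measurable_swap, Measure.prod_swap⟩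
  have hmeas : Measurable
      (fun f : Fin m → α × α => fun j => if σ j = true then Prod.swap (f j) else f j) := by
    refine measurable_pi_lambda _ fun j => ?_
    by_cases h : σ j = true
    · simp only [h, ↓reduceIte]; exact measurable_swap.comp (measurable_pi_apply j)
    · simpa [h] using measurable_pi_apply j
  refine ⟨hmeas, ?_⟩
  refine (Measure.pi_eq fun s hs => ?_).symm
  rw [Measure.map_apply hmeas (MeasurableSet.univ_pi hs)]
  have hpre : (fun f : Fin m → α × α => fun j => if σ j = true then Prod.swap (f j) else f j) ⁻¹'
      (Set.univ.pi s) = Set.univ.pi (fun j => if σ j = true then Prod.swap ⁻¹' (s j) else s j) := by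
    ext f
    simp only [Set.mem_preimage, Set.mem_pi, Set.mem_univ, true_implies]
    refine forall_congr' fun j => ?_
    by_cases h : σ j = true <;> simp [h]
  rw [hpre, Measure.pi_pi]
  refine Finset.prod_congr rfl fun j _ => ?_
  by_cases h : σ j = true
  · simp only [h, if_true]
    exact hswap.measure_preimage (hs j).nullMeasurableSet
  · simp [h]

lemma coreFin {X : Type*} [MeasurableSpace X] (μ : Measure X) [IsProbabilityMeasure μ]
    (ℬ : Finset (Set X)) (hmeasB : ∀ A ∈ ℬ, MeasurableSet A)
    (hbig : ∀ A ∈ ℬ, (1:ℝ≥0∞)/16 < μ A) {d : ℕ}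
    (hVC : ∀ S : Finset X, (∀ T ⊆ S, ∃ A ∈ ℬ, ∀ w ∈ S, w ∈ A ↔ w ∈ T) → S.card ≤ d)
    {m : ℕ} (hm : 2048 ≤ m) :
    Measure.pi (fun _ : Fin m => μ) (⋃ A ∈ ℬ, {xs : Fin m → X | ∀ j, xs j ∉ A})
      ≤ 2 * (∑ i ∈ Iic d, (2*m).choose i : ℕ) * ((2 : ℝ≥0∞) ^ (m/32 + 1))⁻¹ := by
  classical
  set k := m/32 + 1 with hk
  have hkm : k ≤ m := by omega
  set N : ℕ := ∑ i ∈ Iic d, (2*m).choose i with hN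
  set P := Measure.pi (fun _ : Fin m => μ) with hP
  haveI : IsProbabilityMeasure P := by rw [hP]; infer_instance
  set Pr := P.prod P with hPr
  haveI : IsProbabilityMeasure Pr := by rw [hPr]; infer_instance
  set CA : Set X → Set (Fin m → X) := fun A => {xs | ∀ j, xs j ∉ A} with hCA
  set DA : Set X → Set (Fin m → X) :=
    fun A => {ys | k ≤ (univ.filter fun j => ys j ∈ A).card} with hDA
  have hCmeas : ∀ A ∈ ℬ, MeasurableSet (CA A) := by
    intro A hA
    have h1 : CA A = ⋂ j, (fun xs : Fin m → X => xs j) ⁻¹' Aᶜ := by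
      ext xs; simp [hCA]
    rw [h1]
    exact MeasurableSet.iInter fun j => (measurable_pi_apply j) (hmeasB A hA).compl
  have hDmeas : ∀ A ∈ ℬ, MeasurableSet (DA A) := by
    intro A hA
    have hg : Measurable (fun ys : Fin m → X => (univ.filter fun j => ys j ∈ A).card) := by
      have h1 : (fun ys : Fin m → X => (univ.filter fun j => ys j ∈ A).card)
          = fun ys => ∑ j : Fin m, (if ys j ∈ A then 1 else 0) := by
        funext ys; rw [Finset.card_filter]
      rw [h1]
      exact Finset.measurable_sum _ fun j _ =>
        Measurable.ite ((measurable_pi_apply j) (hmeasB A hA)) measurable_const measurable_const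
    exact hg measurableSet_Ici
  set B := ⋃ A ∈ ℬ, CA A with hB
  set B' := ⋃ A ∈ ℬ, (CA A) ×ˢ (DA A) with hB'
  have hBmeas : MeasurableSet B :=
    Finset.measurableSet_biUnion _ fun A hA => hCmeas A hA
  have hB'meas : MeasurableSet B' :=
    Finset.measurableSet_biUnion _ fun A hA => (hCmeas A hA).prod (hDmeas A hA)
  -- Step 1
  have hslice : ∀ xs ∈ B, (1/2 : ℝ≥0∞) ≤ P (Prod.mk xs ⁻¹' B') := by
    intro xs hxs
    obtain ⟨A, hA, hxsA⟩ : ∃ A ∈ ℬ, xs ∈ CA A := by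
      rw [hB] at hxs
      simpa using hxs
    rw [hP]
    refine le_trans (count_lemma μ (hmeasB A hA) (hbig A hA) hm le_rfl) (measure_mono ?_)
    intro ys hys
    rw [Set.mem_preimage, hB']
    exact Set.mem_biUnion hA ⟨hxsA, hys⟩
  have hstep1 : P B ≤ 2 * Pr B' := by
    have h1 : Pr B' = ∫⁻ xs, P (Prod.mk xs ⁻¹' B') ∂P := by
      rw [hPr]; exact Measure.prod_apply hB'meas
    have h2 : (1/2 : ℝ≥0∞) * P B ≤ Pr B' := by
      rw [h1]
      calc (1/2 : ℝ≥0∞) * P B = ∫⁻ _ in B, (1/2 : ℝ≥0∞) ∂P := by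
            rw [setLIntegral_const, mul_comm]
        _ ≤ ∫⁻ xs in B, P (Prod.mk xs ⁻¹' B') ∂P :=
            setLIntegral_mono (measurable_measure_prodMk_left hB'meas) hslice
        _ ≤ ∫⁻ xs, P (Prod.mk xs ⁻¹' B') ∂P := setLIntegral_le_lintegral _ _
    have h3 : (2 : ℝ≥0∞) * (1/2) = 1 := by
      rw [one_div, ENNReal.mul_inv_cancel (by norm_num) ENNReal.ofNat_ne_top]
    calc P B = 2 * (1/2 : ℝ≥0∞) * P B := by rw [h3, one_mul]
      _ = 2 * ((1/2 : ℝ≥0∞) * P B) := by rw [mul_assoc]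
      _ ≤ 2 * Pr B' := mul_le_mul_right h2 2
  -- Step 2 : swaps
  set tau : (Fin m → Bool) → ((Fin m → X) × (Fin m → X)) → ((Fin m → X) × (Fin m → X)) :=
    fun σ q => (fun j => if σ j = true then q.2 j else q.1 j,
                fun j => if σ j = true then q.1 j else q.2 j) with htau
  have htau_mp : ∀ σ, MeasurePreserving (tau σ) Pr Pr := by
    intro σ
    have he := measurePreserving_arrowProdEquivProdArrow X X (Fin m) (fun _ => μ) (fun _ => μ)
    set e := MeasurableEquiv.arrowProdEquivProdArrow X X (Fin m) with hedef
    have hs := mp_swap_pi μ σ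
    have hesymm := MeasurePreserving.symm e he
    have hcomp := he.comp (hs.comp hesymm)
    have heq : tau σ = e ∘
        (fun f : Fin m → X × X => fun j => if σ j = true then Prod.swap (f j) else f j)
        ∘ e.symm := by
      funext q
      have h1 : ∀ j, (e.symm q) j = (q.1 j, q.2 j) := fun j => rfl
      refine Prod.ext ?_ ?_ <;> funext j <;>
        simp only [htau, Function.comp_apply, hedef, MeasurableEquiv.arrowProdEquivProdArrow,
          Equiv.arrowProdEquivProdArrow, MeasurableEquiv.coe_mk, Equiv.coe_fn_mk,
          Equiv.coe_fn_symm_mk] <;>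
        by_cases h : σ j = true <;> simp [h, Prod.swap]
    rw [heq, hPr]
    exact hcomp
  have htau_pre : ∀ σ, Pr (tau σ ⁻¹' B') = Pr B' := fun σ =>
    (htau_mp σ).measure_preimage hB'meas.nullMeasurableSet
  -- pointwise counting
  have hpoint : ∀ q : (Fin m → X) × (Fin m → X),
      (univ.filter fun σ : Fin m → Bool => tau σ q ∈ B').card ≤ N * 2^(m-k) := by
    intro q
    set pat : Set X → (Fin m → Bool × Bool) :=
      fun A => fun j => (decide (q.1 j ∈ A), decide (q.2 j ∈ A)) with hpat
    have hsub : (univ.filter fun σ : Fin m → Bool => tau σ q ∈ B')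
        ⊆ (ℬ.image pat).biUnion (fun PP => univ.filter (fun σ : Fin m → Bool =>
            (∀ j, (if σ j = true then (PP j).2 else (PP j).1) = false) ∧
              k ≤ (univ.filter fun j =>
                (if σ j = true then (PP j).1 else (PP j).2) = true).card)) := by
      intro σ hσ
      rw [mem_filter] at hσ
      have hσ2 := hσ.2
      rw [hB', Set.mem_iUnion₂] at hσ2
      obtain ⟨A, hA, hmem⟩ := hσ2
      rw [Finset.mem_biUnion]
      refine ⟨pat A, Finset.mem_image_of_mem _ hA, ?_⟩
      rw [mem_filter]
      obtain ⟨h1, h2⟩ := hmem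
      refine ⟨mem_univ _, ?_, ?_⟩
      · intro j
        have h3 : (if σ j = true then q.2 j else q.1 j) ∉ A := h1 j
        rw [hpat]
        by_cases hσj : σ j = true <;> simp only [hσj, if_true, if_false] at h3 ⊢ <;>
          simpa using h3
      · have hsetseq : (univ.filter fun j =>
            (if σ j = true then (pat A j).1 else (pat A j).2) = true)
            = (univ.filter fun j => (if σ j = true then q.1 j else q.2 j) ∈ A) := by
          ext j
          simp only [mem_filter, mem_univ, true_and, hpat]
          by_cases hσj : σ j = true <;> simp [hσj]
        rw [hsetseq]
        exact h2
    calc (univ.filter fun σ : Fin m → Bool => tau σ q ∈ B').card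
        ≤ ∑ PP ∈ ℬ.image pat, (univ.filter (fun σ : Fin m → Bool =>
            (∀ j, (if σ j = true then (PP j).2 else (PP j).1) = false) ∧
              k ≤ (univ.filter fun j =>
                (if σ j = true then (PP j).1 else (PP j).2) = true).card)).card :=
          le_trans (Finset.card_le_card hsub) Finset.card_biUnion_le
      _ ≤ ∑ _PP ∈ ℬ.image pat, 2^(m-k) := by
          refine Finset.sum_le_sum fun PP _ => ?_
          exact swap_count (fun j => (PP j).1) (fun j => (PP j).2)
      _ = (ℬ.image pat).card * 2^(m-k) := by rw [Finset.sum_const, smul_eq_mul]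
      _ ≤ N * 2^(m-k) := by
          have := trace_bound ℬ hVC q.1 q.2
          exact Nat.mul_le_mul_right _ (by rw [hN]; exact this)
  -- lintegral bound
  have hstep2 : (2:ℝ≥0∞)^m * Pr B' ≤ (N : ℝ≥0∞) * 2^(m-k) := by
    have hsum : ∑ σ : Fin m → Bool, Pr (tau σ ⁻¹' B') = (2:ℝ≥0∞)^m * Pr B' := by
      rw [Finset.sum_congr rfl (fun σ _ => htau_pre σ), Finset.sum_const, Finset.card_univ]
      rw [Fintype.card_fun]
      simp [nsmul_eq_mul]
    have hsum2 : ∑ σ : Fin m → Bool, Pr (tau σ ⁻¹' B')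
        = ∫⁻ q, ((univ.filter fun σ : Fin m → Bool => tau σ q ∈ B').card : ℝ≥0∞) ∂Pr := by
      have h1 : ∀ σ : Fin m → Bool, Pr (tau σ ⁻¹' B')
          = ∫⁻ q, Set.indicator (tau σ ⁻¹' B') 1 q ∂Pr := fun σ =>
        (lintegral_indicator_one ((htau_mp σ).measurable hB'meas)).symm
      rw [Finset.sum_congr rfl fun σ _ => h1 σ, ← lintegral_finset_sum]
      · congr 1
        funext q
        rw [Finset.card_filter]
        push_cast
        refine Finset.sum_congr rfl fun σ _ => ?_
        by_cases h : tau σ q ∈ B' <;> simp [Set.indicator_apply, h]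
      · exact fun σ _ => measurable_one.indicator ((htau_mp σ).measurable hB'meas)
    rw [← hsum, hsum2]
    calc ∫⁻ q, ((univ.filter fun σ : Fin m → Bool => tau σ q ∈ B').card : ℝ≥0∞) ∂Pr
        ≤ ∫⁻ _, ((N * 2^(m-k) : ℕ) : ℝ≥0∞) ∂Pr := by
          refine lintegral_mono fun q => ?_
          exact (Nat.cast_le (α := ℝ≥0∞)).2 (hpoint q)
      _ = ((N * 2^(m-k) : ℕ) : ℝ≥0∞) := by
          rw [lintegral_const, measure_univ, mul_one]
      _ = (N : ℝ≥0∞) * 2^(m-k) := by push_cast; ring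
  -- final
  have h2mk : (2:ℝ≥0∞)^(m-k) * ((2:ℝ≥0∞)^m)⁻¹ = ((2:ℝ≥0∞)^k)⁻¹ := by
    have hsplit : (2:ℝ≥0∞)^m = 2^(m-k) * 2^k := by
      rw [← pow_add]
      congr 1
      omega
    rw [hsplit, ENNReal.mul_inv (Or.inl (by positivity)) (Or.inl (by
      exact ENNReal.pow_ne_top ENNReal.ofNat_ne_top)), ← mul_assoc,
      ENNReal.mul_inv_cancel (by positivity) (ENNReal.pow_ne_top ENNReal.ofNat_ne_top), one_mul]
  have hPrB' : Pr B' ≤ (N : ℝ≥0∞) * ((2:ℝ≥0∞)^k)⁻¹ := by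
    have h2m0 : ((2:ℝ≥0∞)^m) ≠ 0 := by positivity
    have h2mtop : ((2:ℝ≥0∞)^m) ≠ ⊤ := ENNReal.pow_ne_top ENNReal.ofNat_ne_top
    have := mul_le_mul_right hstep2 (((2:ℝ≥0∞)^m)⁻¹)
    rw [← mul_assoc, ENNReal.inv_mul_cancel h2m0 h2mtop, one_mul] at this
    calc Pr B' ≤ ((2:ℝ≥0∞)^m)⁻¹ * ((N : ℝ≥0∞) * 2^(m-k)) := this
      _ = (N : ℝ≥0∞) * (2^(m-k) * ((2:ℝ≥0∞)^m)⁻¹) := by ring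
      _ = (N : ℝ≥0∞) * ((2:ℝ≥0∞)^k)⁻¹ := by rw [h2mk]
  calc P B ≤ 2 * Pr B' := hstep1
    _ ≤ 2 * ((N : ℝ≥0∞) * ((2:ℝ≥0∞)^k)⁻¹) := mul_le_mul_right hPrB' 2
    _ = 2 * (N : ℝ≥0∞) * ((2:ℝ≥0∞)^k)⁻¹ := by rw [mul_assoc]

lemma core {X : Type*} [MeasurableSpace X] (μ : Measure X) [IsProbabilityMeasure μ]
    {𝒜 : Set (Set X)} (hc : 𝒜.Countable) (hmeasA : ∀ A ∈ 𝒜, MeasurableSet A)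
    (hbig : ∀ A ∈ 𝒜, (1:ℝ≥0∞)/16 < μ A) {d : ℕ}
    (hVC : ∀ S : Finset X, (∀ T ⊆ S, ∃ A ∈ 𝒜, ∀ w ∈ S, w ∈ A ↔ w ∈ T) → S.card ≤ d)
    {m : ℕ} (hm : 2048 ≤ m) :
    Measure.pi (fun _ : Fin m => μ) (⋃ A ∈ 𝒜, {xs : Fin m → X | ∀ j, xs j ∉ A})
      ≤ 2 * (∑ i ∈ Iic d, (2*m).choose i : ℕ) * ((2 : ℝ≥0∞) ^ (m/32 + 1))⁻¹ := by
  classical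
  rcases Set.eq_empty_or_nonempty 𝒜 with rfl | hne
  · simp
  obtain ⟨f, rfl⟩ := Set.Countable.exists_eq_range hc hne
  set G : ℕ → Set (Fin m → X) :=
    fun NN => ⋃ A ∈ (Finset.range (NN+1)).image f, {xs : Fin m → X | ∀ j, xs j ∉ A} with hG
  have hunion : (⋃ A ∈ Set.range f, {xs : Fin m → X | ∀ j, xs j ∉ A}) = ⋃ NN : ℕ, G NN := by
    ext xs
    simp only [hG, Set.mem_iUnion₂, Set.mem_iUnion, Set.mem_range, Finset.mem_image,
      Finset.mem_range]
    constructor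
    · rintro ⟨A, ⟨n, rfl⟩, hxs⟩
      exact ⟨n, f n, ⟨n, by omega, rfl⟩, hxs⟩
    · rintro ⟨NN, A, ⟨n, _, rfl⟩, hxs⟩
      exact ⟨f n, ⟨n, rfl⟩, hxs⟩
  rw [hunion]
  have hmono : Monotone G := by
    intro a b hab
    refine Set.iUnion₂_mono' fun A hA => ?_
    refine ⟨A, ?_, subset_rfl⟩
    simp only [Finset.mem_image, Finset.mem_range] at hA ⊢
    obtain ⟨n, hn, rfl⟩ := hA
    exact ⟨n, by omega, rfl⟩
  rw [hmono.directed_le.measure_iUnion]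
  refine iSup_le fun NN => ?_
  refine coreFin μ ((Finset.range (NN+1)).image f) ?_ ?_ ?_ hm
  · intro A hA
    rw [Finset.mem_image] at hA
    obtain ⟨n, _, rfl⟩ := hA
    exact hmeasA _ ⟨n, rfl⟩
  · intro A hA
    rw [Finset.mem_image] at hA
    obtain ⟨n, _, rfl⟩ := hA
    exact hbig _ ⟨n, rfl⟩
  · intro S hS
    refine hVC S fun T hT => ?_
    obtain ⟨A, hA, hAT⟩ := hS T hT
    rw [Finset.mem_image] at hA
    obtain ⟨n, _, rfl⟩ := hA
    exact ⟨f n, ⟨n, rfl⟩, hAT⟩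

lemma sum_choose_le {n d : ℕ} (hd : 1 ≤ d) (hdn : d ≤ n) :
    ((∑ i ∈ Iic d, n.choose i : ℕ) : ℝ) ≤ ((n:ℝ)/d)^d * Real.exp d := by
  have hn1 : 1 ≤ n := le_trans hd hdn
  have hn0 : (0:ℝ) < n := by exact_mod_cast hn1
  have hd0 : (0:ℝ) < d := by exact_mod_cast hd
  set x : ℝ := (d:ℝ) / n with hx
  have hx0 : 0 < x := by positivity
  have hx1 : x ≤ 1 := by
    rw [hx, div_le_one hn0]
    exact_mod_cast hdn
  have key : ((∑ i ∈ Iic d, n.choose i : ℕ) : ℝ) * x^d ≤ (x+1)^n := by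
    calc ((∑ i ∈ Iic d, n.choose i : ℕ) : ℝ) * x^d
        = ∑ i ∈ Iic d, (n.choose i : ℝ) * x^d := by push_cast; rw [Finset.sum_mul]
      _ ≤ ∑ i ∈ Iic d, (n.choose i : ℝ) * x^i := by
          refine Finset.sum_le_sum fun i hi => ?_
          have hxi : x^d ≤ x^i := pow_le_pow_of_le_one hx0.le hx1 (Finset.mem_Iic.mp hi)
          exact mul_le_mul_of_nonneg_left hxi (by positivity)
      _ ≤ ∑ i ∈ Finset.range (n+1), (n.choose i : ℝ) * x^i := by
          refine Finset.sum_le_sum_of_subset_of_nonneg ?_ fun i _ _ => by positivity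
          intro i hi
          rw [Finset.mem_Iic] at hi
          rw [Finset.mem_range]
          omega
      _ = (x+1)^n := by
          rw [add_pow]
          refine Finset.sum_congr rfl fun i _ => ?_
          rw [one_pow]
          ring
  have h2 : (x+1)^n ≤ Real.exp d := by
    calc (x+1)^n ≤ (Real.exp x)^n := by
          refine pow_le_pow_left₀ (by positivity) ?_ n
          exact Real.add_one_le_exp x
      _ = Real.exp (n * x) := by rw [← Real.exp_nat_mul]
      _ = Real.exp d := by
          congr 1
          rw [hx]
          field_simp
  have hxd : (0:ℝ) < x^d := by positivity
  calc ((∑ i ∈ Iic d, n.choose i : ℕ) : ℝ)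
      = (((∑ i ∈ Iic d, n.choose i : ℕ) : ℝ) * x^d) / x^d := by field_simp
    _ ≤ Real.exp d / x^d := by
        gcongr
        exact le_trans key h2
    _ = ((n:ℝ)/d)^d * Real.exp d := by
        rw [div_eq_mul_inv, ← inv_pow, hx, inv_div]
        ring

lemma log2_lb : (0.6:ℝ) ≤ Real.log 2 := by
  rw [Real.le_log_iff_exp_le (by norm_num : (0:ℝ) < 2)]
  have h5 : Real.exp 0.6 ^ (5:ℕ) = Real.exp 3 := by
    rw [← Real.exp_nat_mul]
    norm_num
  have h3 : Real.exp 3 ≤ 32 := by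
    have h1 : Real.exp 3 = Real.exp 1 ^ (3:ℕ) := by
      rw [← Real.exp_nat_mul]; norm_num
    rw [h1]
    calc Real.exp 1 ^ (3:ℕ) ≤ 2.7182818286 ^ (3:ℕ) :=
          pow_le_pow_left₀ (Real.exp_pos 1).le Real.exp_one_lt_d9.le 3
      _ ≤ 32 := by norm_num
  have h2 : Real.exp 0.6 ^ (5:ℕ) ≤ 2 ^ (5:ℕ) := by
    rw [h5]
    calc Real.exp 3 ≤ 32 := h3
      _ = 2^(5:ℕ) := by norm_num
  exact le_of_pow_le_pow_left₀ (by norm_num) (by norm_num) h2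
lemma log2e4_ub : Real.log 20000 ≤ 10 := by
  rw [Real.log_le_iff_le_exp (by norm_num : (0:ℝ) < 20000)]
  have h1 : Real.exp 10 = Real.exp 1 ^ (10:ℕ) := by
    rw [← Real.exp_nat_mul]; norm_num
  have := Real.exp_one_gt_d9
  rw [h1]
  calc (20000:ℝ) ≤ 2.7182818283 ^ (10:ℕ) := by norm_num
    _ ≤ Real.exp 1 ^ (10:ℕ) := by
        refine pow_le_pow_left₀ (by norm_num) ?_ _
        linarith

lemma numeric {d m : ℕ} (hd : 1 ≤ d) {δ : ℝ} (hδ : 0 < δ) (hδ1 : δ < 1)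
    (hm : 10000 * ((d:ℝ) + Real.log (1/δ)) ≤ (m:ℝ)) :
    (2 * ((∑ i ∈ Iic d, (2*m).choose i : ℕ) : ℝ≥0∞) * ((2 : ℝ≥0∞) ^ (m/32 + 1))⁻¹)
      ≤ ENNReal.ofReal δ := by
  set L := Real.log (1/δ) with hL
  have hL0 : 0 < L := Real.log_pos (one_lt_one_div hδ hδ1)
  have hd0 : (0:ℝ) < d := by exact_mod_cast hd
  have hdm : (d:ℝ) ≤ (m:ℝ)/10000 := by linarith
  have hLm : L ≤ (m:ℝ)/10000 := by linarith
  have h1m : (1:ℝ) ≤ (m:ℝ)/10000 := by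
    have : (1:ℝ) ≤ (d:ℝ) := by exact_mod_cast hd
    linarith
  have hm0 : (0:ℝ) < m := by linarith
  set N := ∑ i ∈ Iic d, (2*m).choose i with hN
  have hN1 : 1 ≤ N := by
    rw [hN]
    calc 1 = (2*m).choose 0 := (Nat.choose_zero_right _).symm
      _ ≤ ∑ i ∈ Iic d, (2*m).choose i :=
          Finset.single_le_sum (f := fun i => (2*m).choose i) (fun i _ => Nat.zero_le _)
            (Finset.mem_Iic.2 (Nat.zero_le d))
  set k := m/32 + 1 with hk
  have hkR : (m:ℝ)/32 ≤ (k:ℕ) := by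
    have hnat : m < 32 * (m/32 + 1) := by omega
    have h32 : (m:ℝ) < 32 * (((m/32 : ℕ) : ℝ) + 1) := by exact_mod_cast hnat
    rw [hk]; push_cast
    linarith
  have hdn : d ≤ 2*m := by
    have hdm' : (d:ℝ) ≤ (m:ℝ) := by linarith
    have : d ≤ m := by exact_mod_cast hdm'
    omega
  have hreal : 2 * (N:ℝ) / 2^k ≤ δ := by
    have hNb : (N:ℝ) ≤ (((2*m:ℕ):ℝ)/d)^d * Real.exp d := sum_choose_le hd hdn
    have hpos : (0:ℝ) < 2 * N / 2^k := by positivity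
    rw [← Real.log_le_log_iff hpos hδ]
    rw [Real.log_div (by positivity) (by positivity),
      Real.log_mul (by norm_num) (by exact_mod_cast Nat.one_le_iff_ne_zero.mp hN1), Real.log_pow]
    have hlogδ : Real.log δ = -L := by
      rw [hL, one_div, Real.log_inv]; ring
    set t : ℝ := (2*(m:ℝ))/d with ht
    have ht0 : 0 < t := by positivity
    have hlogN : Real.log N ≤ (d:ℝ) * Real.log t + d := by
      calc Real.log N ≤ Real.log ((((2*m:ℕ):ℝ)/d)^d * Real.exp d) :=
            Real.log_le_log (by exact_mod_cast hN1) hNb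
        _ = (d:ℝ) * Real.log t + d := by
            have hb : (0:ℝ) < ((2*m:ℕ):ℝ)/(d:ℝ) := div_pos (by push_cast; linarith) hd0
            rw [Real.log_mul (pow_ne_zero d hb.ne') (Real.exp_pos _).ne', Real.log_pow,
              Real.log_exp, ht]
            push_cast
            ring
    have htang : Real.log t ≤ t/20000 + Real.log 20000 - 1 := by
      have h1 : Real.log (t/20000) ≤ t/20000 - 1 :=
        Real.log_le_sub_one_of_pos (by positivity)
      have h2 : Real.log (t/20000) = Real.log t - Real.log 20000 :=
        Real.log_div (by positivity) (by norm_num)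
      linarith
    have h5 : (d:ℝ) * Real.log t ≤ 2*(m:ℝ)/20000 + d * (Real.log 20000 - 1) := by
      have h6 := mul_le_mul_of_nonneg_left htang hd0.le
      have heq : (d:ℝ) * (t/20000) = 2*(m:ℝ)/20000 := by
        rw [ht]; field_simp
      nlinarith
    have hlog20000 : (0:ℝ) ≤ Real.log 20000 := Real.log_nonneg (by norm_num)
    have ha2 : (d:ℝ) * Real.log 20000 ≤ ((m:ℝ)/10000) * 10 :=
      mul_le_mul hdm log2e4_ub hlog20000 (by linarith)
    have ha3 : Real.log 2 ≤ 1 := by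
      have := Real.log_le_sub_one_of_pos (by norm_num : (0:ℝ) < 2)
      linarith
    have ha4 : ((m:ℝ)/32) * 0.6 ≤ (k:ℕ) * Real.log 2 := by
      refine mul_le_mul hkR log2_lb (by norm_num) ?_
      positivity
    -- combine
    rw [hlogδ]
    have hfin : Real.log 2 + Real.log N + L ≤ (k:ℕ) * Real.log 2 := by
      have hb1 : Real.log N ≤ (m:ℝ)/10000 + d * Real.log 20000 := by
        calc Real.log N ≤ (d:ℝ) * Real.log t + d := hlogN
          _ ≤ 2*(m:ℝ)/20000 + d * (Real.log 20000 - 1) + d := by linarith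
          _ = (m:ℝ)/10000 + d * Real.log 20000 := by ring
      have : Real.log 2 + Real.log N + L ≤ 1 + ((m:ℝ)/10000 + ((m:ℝ)/10000)*10) + (m:ℝ)/10000 := by
        linarith
      have h13 : (1:ℝ) + ((m:ℝ)/10000 + ((m:ℝ)/10000)*10) + (m:ℝ)/10000 ≤ 13 * ((m:ℝ)/10000) := by
        linarith
      calc Real.log 2 + Real.log N + L ≤ 13 * ((m:ℝ)/10000) := by linarith
        _ ≤ ((m:ℝ)/32) * 0.6 := by linarith
        _ ≤ (k:ℕ) * Real.log 2 := ha4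
    linarith
  -- to ENNReal
  have hofreal : ENNReal.ofReal (2 * (N:ℝ) / 2^k)
      = 2 * ((N:ℕ) : ℝ≥0∞) * ((2 : ℝ≥0∞) ^ k)⁻¹ := by
    rw [div_eq_mul_inv, ENNReal.ofReal_mul (by positivity), ENNReal.ofReal_mul (by norm_num),
      ENNReal.ofReal_natCast, ENNReal.ofReal_inv_of_pos (by positivity : (0:ℝ) < 2^k),
      ENNReal.ofReal_pow (by norm_num : (0:ℝ) ≤ 2)]
    norm_num
  rw [← hofreal]
  exact ENNReal.ofReal_le_ofReal hreal

lemma measurable_voteSeq {X : Type*} [MeasurableSpace X] (ε : ℝ) (h : ℕ → X → ℤ)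
    (hh : ∀ n, Measurable (h n)) (n : ℕ) : Measurable (VoteSeq ε h n) := by
  induction n using Nat.strong_induction_on with
  | _ n ih =>
    match n with
    | 0 => exact measurable_const
    | 1 => exact hh 1
    | (n+2) =>
      have h1 := ih (n+1) (by omega)
      have h2 : Measurable (fun p : ℤ × ℤ => clip ε (p.1 + 2 * p.2)) :=
        measurable_of_countable _
      have h3 : Measurable (fun x => (VoteSeq ε h (n+1) x, h (n+2) x)) :=
        h1.prodMk (hh (n+2))
      have h4 : VoteSeq ε h (n+2) = (fun p : ℤ × ℤ => clip ε (p.1 + 2 * p.2)) ∘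
          (fun x => (VoteSeq ε h (n+1) x, h (n+2) x)) := rfl
      rw [h4]
      exact h2.comp h3

lemma measurable_majSeq {X : Type*} [MeasurableSpace X] (ε : ℝ) (h : ℕ → X → ℤ)
    (hh : ∀ n, Measurable (h n)) (n : ℕ) : Measurable (MajSeq ε h n) := by
  have hv := measurable_voteSeq ε h hh n
  have h2 : Measurable (fun z : ℤ => if 0 ≤ z then (1:ℤ) else -1) := measurable_of_countable _
  have h4 : MajSeq ε h n = (fun z : ℤ => if 0 ≤ z then (1:ℤ) else -1) ∘ (VoteSeq ε h n) := rfl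
  rw [h4]
  exact h2.comp hv


end Stmt7Aux

open Stmt7Aux Finset

/-- Lemma 1 of the paper: there is a universal constant `C > 0` such that for
every countable class `H` of measurable `±1`-valued functions of VC dimension at most `d`,
probability measure `D`, ground truth `g ∈ H`, clip parameter `ε ∈ (0,1)`, `i ≥ 2`, measurable
`±1`-valued `h₁,…,h_{i-1}` with `D(Maj(h₁,…,h_{i-1}) ≠ g) > 0`, and every `δ ∈ (0,1)` and
`m ≥ C (d + log(1/δ))`: with probability at least `1 - δ` over an i.i.d. sample of size `m`
from `D` conditioned on `{Maj(h₁,…,h_{i-1}) ≠ g}`, every `h ∈ H` consistent with `g` on the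
sample satisfies `D(Maj(h₁,…,h_{i-1}) ≠ g ∧ h ≠ g) ≤ (1/16) D(Maj(h₁,…,h_{i-1}) ≠ g)`. -/
theorem stmt7 :
    ∃ C : ℝ, 0 < C ∧
      ∀ (X : Type) (_ : MeasurableSpace X) (H : Set (X → ℤ)) (d : ℕ),
        H.Countable → (∀ h ∈ H, Measurable h) → (∀ h ∈ H, ∀ x, h x = 1 ∨ h x = -1) →
        VCDimLE H d →
        ∀ (D : Measure X), IsProbabilityMeasure D →
        ∀ g ∈ H, ∀ ε ∈ Set.Ioo (0 : ℝ) 1, ∀ i : ℕ, 2 ≤ i →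
        ∀ h : ℕ → X → ℤ, (∀ n, Measurable (h n)) → (∀ n x, h n x = 1 ∨ h n x = -1) →
        0 < D {x | MajSeq ε h (i - 1) x ≠ g x} →
        ∀ δ ∈ Set.Ioo (0 : ℝ) 1, ∀ m : ℕ, C * ((d : ℝ) + Real.log (1 / δ)) ≤ (m : ℝ) →
        1 - ENNReal.ofReal δ ≤
          (Measure.pi fun _ : Fin m => D[|{x | MajSeq ε h (i - 1) x ≠ g x}])
            {xs | ∀ hf ∈ H, (∀ j : Fin m, hf (xs j) = g (xs j)) →
              D {x | MajSeq ε h (i - 1) x ≠ g x ∧ hf x ≠ g x} ≤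
                (1 / 16 : ℝ≥0∞) * D {x | MajSeq ε h (i - 1) x ≠ g x}} := by

  classical
  refine ⟨10000, by norm_num, ?_⟩
  intro X mX H d hHc hHmeas hHpm hVC D hD g hg ε hε i hi h hhmeas hhpm hpos δ hδ m hm
  obtain ⟨hδ0, hδ1⟩ := hδ
  set E := {x | MajSeq ε h (i - 1) x ≠ g x} with hE
  set μ := D[|E] with hμ
  have hMajMeas : Measurable (MajSeq ε h (i-1)) := measurable_majSeq ε h hhmeas (i-1)
  have hgMeas : Measurable g := hHmeas g hg
  have hEmeas : MeasurableSet E := by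
    have h1 : E = {x | MajSeq ε h (i-1) x = g x}ᶜ := by
      rw [hE]; ext x; simp
    rw [h1]
    exact (measurableSet_eq_fun hMajMeas hgMeas).compl
  have hDE0 : D E ≠ 0 := hpos.ne'
  have hDEtop : D E ≠ ⊤ := measure_ne_top D E
  haveI : IsProbabilityMeasure μ := by
    rw [hμ]; exact cond_isProbabilityMeasure hDE0
  haveI : IsProbabilityMeasure (Measure.pi (fun _ : Fin m => μ)) := inferInstance
  have hL0 : 0 < Real.log (1/δ) := Real.log_pos (by rw [lt_div_iff₀ hδ0]; linarith)
  have hAmeas : ∀ f : X → ℤ, Measurable f → MeasurableSet {x | f x ≠ g x} := by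
    intro f hf
    have h1 : {x | f x ≠ g x} = {x | f x = g x}ᶜ := by ext x; simp
    rw [h1]
    exact (measurableSet_eq_fun hf hgMeas).compl
  have hcond : ∀ f : X → ℤ,
      D (E ∩ {x | f x ≠ g x}) = D E * μ {x | f x ≠ g x} := by
    intro f
    rw [hμ, cond_apply hEmeas, ← mul_assoc, ENNReal.mul_inv_cancel hDE0 hDEtop, one_mul]
  have hsmall : ∀ f : X → ℤ, μ {x | f x ≠ g x} ≤ 1/16 →
      D {x | MajSeq ε h (i - 1) x ≠ g x ∧ f x ≠ g x} ≤ (1/16 : ℝ≥0∞) * D E := by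
    intro f hb
    have h1 : {x | MajSeq ε h (i - 1) x ≠ g x ∧ f x ≠ g x} = E ∩ {x | f x ≠ g x} := by
      rw [hE]; ext x; simp [Set.mem_inter_iff]
    rw [h1, hcond f]
    calc D E * μ {x | f x ≠ g x} ≤ D E * (1/16) := mul_le_mul_right hb _
      _ = (1/16) * D E := mul_comm _ _
  rcases Nat.eq_zero_or_pos d with rfl | hd
  · -- degenerate case : all members of H coincide with g
    have hallg : ∀ f ∈ H, ∀ x, f x = g x := by
      intro f hf x
      by_contra hne
      have hshat : ∀ σ : X → Bool, ∃ h' ∈ H,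
          ∀ w ∈ ({x} : Finset X), h' w = (if σ w then 1 else -1) := by
        intro σ
        by_cases hσ : σ x = true
        · rcases hHpm f hf x with hf1 | hf1
          · exact ⟨f, hf, fun w hw => by
              rw [Finset.mem_singleton] at hw; subst hw; simp [hσ, hf1]⟩
          · have hg1 : g x = 1 := by
              rcases hHpm g hg x with h1 | h1
              · exact h1
              · exact absurd (hf1.trans h1.symm) hne
            exact ⟨g, hg, fun w hw => by
              rw [Finset.mem_singleton] at hw; subst hw; simp [hσ, hg1]⟩
        · rcases hHpm f hf x with hf1 | hf1
          · have hg1 : g x = -1 := by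
              rcases hHpm g hg x with h1 | h1
              · exact absurd (hf1.trans h1.symm) hne
              · exact h1
            exact ⟨g, hg, fun w hw => by
              rw [Finset.mem_singleton] at hw; subst hw; simp [hσ, hg1]⟩
          · exact ⟨f, hf, fun w hw => by
              rw [Finset.mem_singleton] at hw; subst hw; simp [hσ, hf1]⟩
      have := hVC {x} hshat
      simp at this
    have huniv : {xs : Fin m → X | ∀ hf ∈ H, (∀ j : Fin m, hf (xs j) = g (xs j)) →
        D {x | MajSeq ε h (i - 1) x ≠ g x ∧ hf x ≠ g x} ≤
          (1 / 16 : ℝ≥0∞) * D E} = Set.univ := by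
      rw [Set.eq_univ_iff_forall]
      intro xs hf hfH _
      have hempty : {x | MajSeq ε h (i - 1) x ≠ g x ∧ hf x ≠ g x} = ∅ := by
        ext x
        simp only [Set.mem_setOf_eq, Set.mem_empty_iff_false, iff_false, not_and]
        intro _ hne
        exact hne (hallg hf hfH x)
      rw [hempty]
      simp
    rw [huniv]
    rw [measure_univ]
    exact tsub_le_self
  -- main case
  set H' := {f ∈ H | ¬ (D {x | MajSeq ε h (i-1) x ≠ g x ∧ f x ≠ g x} ≤ (1/16 : ℝ≥0∞) * D E)}
    with hH'
  set 𝒜 : Set (Set X) := (fun f => {x | f x ≠ g x}) '' H' with h𝒜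
  have h𝒜c : 𝒜.Countable := (hHc.mono (Set.sep_subset _ _)).image _
  have h𝒜meas : ∀ A ∈ 𝒜, MeasurableSet A := by
    rintro A ⟨f, hf, rfl⟩
    exact hAmeas f (hHmeas f hf.1)
  have h𝒜big : ∀ A ∈ 𝒜, (1:ℝ≥0∞)/16 < μ A := by
    rintro A ⟨f, ⟨hfH, hfbad⟩, rfl⟩
    by_contra hle
    push_neg at hle
    exact hfbad (hsmall f hle)
  have h𝒜VC : ∀ S : Finset X, (∀ T ⊆ S, ∃ A ∈ 𝒜, ∀ w ∈ S, w ∈ A ↔ w ∈ T) → S.card ≤ d := by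
    intro S hS
    refine hVC S fun σ => ?_
    set T : Finset X := S.filter (fun x => (if σ x then (1:ℤ) else -1) ≠ g x) with hT
    obtain ⟨A, hA𝒜, hiff⟩ := hS T (Finset.filter_subset _ _)
    obtain ⟨f, ⟨hfH, _⟩, rfl⟩ := hA𝒜
    refine ⟨f, hfH, fun x hx => ?_⟩
    have h1 := hiff x hx
    rw [hT, Finset.mem_filter] at h1
    simp only [Set.mem_setOf_eq] at h1
    rcases hHpm f hfH x with hfx | hfx <;> rcases hHpm g hg x with hgx | hgx <;>
      by_cases hσ : σ x <;> simp [hσ, hfx, hgx, hx] at h1 ⊢ <;> omega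
  have hmnat : 2048 ≤ m := by
    have hd1 : (1:ℝ) ≤ d := by exact_mod_cast hd
    have h1 : (2048:ℝ) ≤ m := by nlinarith
    exact_mod_cast h1
  have hcore := core μ h𝒜c h𝒜meas h𝒜big h𝒜VC hmnat
  have hnum := numeric hd hδ0 hδ1 hm
  have hbadle : Measure.pi (fun _ : Fin m => μ)
      (⋃ A ∈ 𝒜, {xs : Fin m → X | ∀ j, xs j ∉ A}) ≤ ENNReal.ofReal δ :=
    le_trans hcore hnum
  have hbadmeas : MeasurableSet (⋃ A ∈ 𝒜, {xs : Fin m → X | ∀ j, xs j ∉ A}) := by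
    refine MeasurableSet.biUnion h𝒜c fun A hA => ?_
    have h1 : {xs : Fin m → X | ∀ j, xs j ∉ A} = ⋂ j, (fun xs : Fin m → X => xs j) ⁻¹' Aᶜ := by
      ext xs; simp
    rw [h1]
    exact MeasurableSet.iInter fun j => (measurable_pi_apply j) (h𝒜meas A hA).compl
  have hincl : (⋃ A ∈ 𝒜, {xs : Fin m → X | ∀ j, xs j ∉ A})ᶜ
      ⊆ {xs : Fin m → X | ∀ hf ∈ H, (∀ j : Fin m, hf (xs j) = g (xs j)) →
          D {x | MajSeq ε h (i - 1) x ≠ g x ∧ hf x ≠ g x} ≤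
            (1 / 16 : ℝ≥0∞) * D E} := by
    intro xs hxs hf hfH hcons
    by_contra hbadhf
    refine hxs ?_
    refine Set.mem_biUnion (show {x | hf x ≠ g x} ∈ 𝒜 from ⟨hf, ⟨hfH, hbadhf⟩, rfl⟩) ?_
    intro j
    simp only [Set.mem_setOf_eq, not_not]
    exact hcons j
  calc 1 - ENNReal.ofReal δ
      ≤ 1 - Measure.pi (fun _ : Fin m => μ) (⋃ A ∈ 𝒜, {xs : Fin m → X | ∀ j, xs j ∉ A}) :=
        tsub_le_tsub_left hbadle 1
    _ = Measure.pi (fun _ : Fin m => μ)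
        (⋃ A ∈ 𝒜, {xs : Fin m → X | ∀ j, xs j ∉ A})ᶜ :=
        (prob_compl_eq_one_sub hbadmeas).symm
    _ ≤ _ := measure_mono hincl
end

section
/- Let X be a measurable space, D a probability measure on X, g : X → {−1,+1} measurable, ε ∈ (0,1), i ≥ 2, h₁,…,h_{i−1} : X → {−1,+1} measurable, and v an odd integer with 1 ≤ v ≤ B_ε. Let h' : X → {−1,+1} be defined by h'(x) := −Maj(h₁,…,h_{i−1})(x) if |Vote(h₁,…,h_{i−1})(x)| = v and h'(x) := Maj(h₁,…,h_{i−1})(x) otherwise. Then: (1) {x : Vote_g(h₁,…,h_{i−1})(x) = −v} ⊆ {x : h'(x) ≠ g(x)} ⊆ {x : Maj(h₁,…,h_{i−1})(x) ≠ g(x)} ∪ {x : Vote_g(h₁,…,h_{i−1})(x) = −v}; (2) consequently, if D({x : h'(x) ≠ g(x)}) > 0 then D|_{h' ≠ g}({x : Vote_g(h₁,…,h_{i−1})(x) = −v}) ≥ D({Vote_g(h₁,…,h_{i−1}) = −v}) / ( D({Maj(h₁,…,h_{i−1}) ≠ g}) + D({Vote_g(h₁,…,h_{i−1}) = −v}) );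 and (3) if moreover D({Vote_g(h₁,…,h_{i−1}) = −v}) ≥ (1/B_ε⁴) · D({Maj(h₁,…,h_{i−1}) ≠ g}), then D|_{h' ≠ g}({x : Vote_g(h₁,…,h_{i−1})(x) = −v}) ≥ 1/(2·B_ε⁴). -/
open MeasureTheory ProbabilityTheory
open scoped ENNReal

/-- The function `h'` obtained from `Maj(h₁,…,h_n)` by flipping its prediction on the region
`{x : |Vote(h₁,…,h_n)(x)| = v}`. -/
noncomputable def hPrime (ε : ℝ) {X : Type*} (h : ℕ → X → ℤ) (n : ℕ) (v : ℤ) (x : X) : ℤ :=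
  if |VoteSeq ε h n x| = v then -MajSeq ε h n x else MajSeq ε h n x

lemma clip_neg (ε : ℝ) (hB : 0 ≤ Bval ε) (x : ℤ) : clip ε (-x) = -clip ε x := by
  simp only [clip, min_def, max_def]; split_ifs <;> omega

lemma voteg_eq (ε : ℝ) (hB : 0 ≤ Bval ε) {X : Type*} (h : ℕ → X → ℤ) (g : X → ℤ)
    (hg : ∀ x, g x = 1 ∨ g x = -1) (hpm : ∀ n x, h n x = 1 ∨ h n x = -1) :
    ∀ n, 1 ≤ n → ∀ x, VoteGSeq ε h g n x = -(g x) * VoteSeq ε h n x := by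
  intro n
  induction n with
  | zero => omega
  | succ m ih =>
    intro _ x
    match m with
    | 0 =>
      simp only [VoteGSeq, VoteSeq]
      rcases hg x with h1 | h1 <;> rcases hpm 1 x with h2 | h2 <;> simp [h1, h2]
    | k + 1 =>
      have hk : VoteGSeq ε h g (k+1) x = -(g x) * VoteSeq ε h (k+1) x := ih (by omega) x
      show clip ε (VoteGSeq ε h g (k+1) x + 2 * _) = _
      rw [hk]
      have hs : (if h (k + 2) x = g x then (-1 : ℤ) else 1) = -(g x) * h (k+2) x := by
        rcases hg x with h1 | h1 <;> rcases hpm (k+2) x with h2 | h2 <;> simp [h1, h2]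
      rw [hs]
      have : -g x * VoteSeq ε h (k + 1) x + 2 * (-g x * h (k + 2) x)
          = -(g x * (VoteSeq ε h (k + 1) x + 2 * h (k + 2) x)) := by ring
      rw [this]
      show _ = -(g x) * clip ε (VoteSeq ε h (k+1) x + 2 * h (k+2) x)
      rcases hg x with h1 | h1 <;>
        simp only [h1, one_mul, neg_one_mul, neg_neg, clip_neg ε hB]

lemma voteSeq_measurable (ε : ℝ) {X : Type*} [MeasurableSpace X] (h : ℕ → X → ℤ)
    (hm : ∀ n, Measurable (h n)) : ∀ n, Measurable (VoteSeq ε h n) := by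
  intro n
  induction n with
  | zero => exact measurable_const
  | succ m ih =>
    match m with
    | 0 => exact hm 1
    | k + 1 =>
      exact (measurable_from_top (f := clip ε)).comp (ih.add ((hm (k+2)).const_mul 2))

/-- the set inclusions and success-probability bound from the proof of
Lemma 2: with `h'` flipping `Maj(h₁,…,h_{i-1})` on `{|Vote(h₁,…,h_{i-1})| = v}`:
(1) `{Vote_g = -v} ⊆ {h' ≠ g} ⊆ {Maj ≠ g} ∪ {Vote_g = -v}`;
(2) if `D(h' ≠ g) > 0` then `D|_{h' ≠ g}(Vote_g = -v) ≥ D(Vote_g = -v)/(D(Maj ≠ g) + D(Vote_g = -v))`;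
(3) if moreover `D(Vote_g = -v) ≥ (1/B_ε⁴) D(Maj ≠ g)`, then
`D|_{h' ≠ g}(Vote_g = -v) ≥ 1/(2 B_ε⁴)`. -/
theorem stmt9 (X : Type) (_ : MeasurableSpace X) (D : Measure X)
    (hD : IsProbabilityMeasure D) (g : X → ℤ) (hgm : Measurable g)
    (hg : ∀ x, g x = 1 ∨ g x = -1) (ε : ℝ) (hε : ε ∈ Set.Ioo (0 : ℝ) 1)
    (i : ℕ) (hi : 2 ≤ i) (h : ℕ → X → ℤ) (hm : ∀ n, Measurable (h n))
    (hpm : ∀ n x, h n x = 1 ∨ h n x = -1)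
    (v : ℤ) (hv : Odd v) (hv1 : 1 ≤ v) (hvB : v ≤ Bval ε) :
    ({x | VoteGSeq ε h g (i - 1) x = -v} ⊆ {x | hPrime ε h (i - 1) v x ≠ g x} ∧
      {x | hPrime ε h (i - 1) v x ≠ g x} ⊆
        {x | MajSeq ε h (i - 1) x ≠ g x} ∪ {x | VoteGSeq ε h g (i - 1) x = -v}) ∧
    (0 < D {x | hPrime ε h (i - 1) v x ≠ g x} →
      D {x | VoteGSeq ε h g (i - 1) x = -v} /
          (D {x | MajSeq ε h (i - 1) x ≠ g x} + D {x | VoteGSeq ε h g (i - 1) x = -v}) ≤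
        (D[|{x | hPrime ε h (i - 1) v x ≠ g x}]) {x | VoteGSeq ε h g (i - 1) x = -v}) ∧
    (0 < D {x | hPrime ε h (i - 1) v x ≠ g x} →
      (1 / ((Bval ε).toNat : ℝ≥0∞) ^ 4) * D {x | MajSeq ε h (i - 1) x ≠ g x} ≤
        D {x | VoteGSeq ε h g (i - 1) x = -v} →
      1 / (2 * ((Bval ε).toNat : ℝ≥0∞) ^ 4) ≤
        (D[|{x | hPrime ε h (i - 1) v x ≠ g x}]) {x | VoteGSeq ε h g (i - 1) x = -v}) := by
  have hB : 0 ≤ Bval ε := by omega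
  set n := i - 1 with hn
  have hn1 : 1 ≤ n := by omega
  have key : ∀ x, VoteGSeq ε h g n x = -(g x) * VoteSeq ε h n x :=
    voteg_eq ε hB h g hg hpm n hn1
  set S := {x | VoteGSeq ε h g n x = -v} with hS
  set A := {x | hPrime ε h n v x ≠ g x} with hA
  set Mset := {x | MajSeq ε h n x ≠ g x} with hMset
  -- inclusion 1
  have inc1 : S ⊆ A := by
    intro x hx
    have hGW := key x
    have hx' : VoteGSeq ε h g n x = -v := hx
    simp only [hA, Set.mem_setOf_eq, hPrime, MajSeq]
    rcases hg x with h1 | h1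
    · rw [h1] at hGW
      have hW : VoteSeq ε h n x = v := by rw [hx'] at hGW; omega
      have habs : |VoteSeq ε h n x| = v := by rw [hW]; exact abs_of_nonneg (by omega)
      rw [if_pos habs, if_pos (by omega : (0:ℤ) ≤ VoteSeq ε h n x), h1]
      omega
    · rw [h1] at hGW
      have hW : VoteSeq ε h n x = -v := by rw [hx'] at hGW; omega
      have habs : |VoteSeq ε h n x| = v := by rw [hW]; rw [abs_neg]; exact abs_of_nonneg (by omega)
      rw [if_pos habs, if_neg (by omega : ¬ (0:ℤ) ≤ VoteSeq ε h n x), h1]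
      omega
  -- inclusion 2
  have inc2 : A ⊆ Mset ∪ S := by
    intro x hx
    by_cases hM : MajSeq ε h n x = g x
    · right
      have hx' : hPrime ε h n v x ≠ g x := hx
      have habs : |VoteSeq ε h n x| = v := by
        by_contra hc
        exact hx' (by rw [hPrime, if_neg hc, hM])
      have hGW := key x
      show VoteGSeq ε h g n x = -v
      by_cases h0 : (0:ℤ) ≤ VoteSeq ε h n x
      · have hM1 : g x = 1 := by rw [← hM, MajSeq, if_pos h0]
        have hW : VoteSeq ε h n x = v := by rw [abs_of_nonneg h0] at habs; omega
        rw [hGW, hM1, hW]; ring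
      · have hM1 : g x = -1 := by rw [← hM, MajSeq, if_neg h0]
        have hW : VoteSeq ε h n x = -v := by
          rw [abs_of_neg (by omega)] at habs; omega
        rw [hGW, hM1, hW]; ring
    · left; exact hM
  -- measurability
  have hWm : Measurable (VoteSeq ε h n) := voteSeq_measurable ε h hm n
  have hHm : Measurable (hPrime ε h n v) := by
    have : hPrime ε h n v = (fun z : ℤ =>
        if |z| = v then -(if 0 ≤ z then (1:ℤ) else -1) else if 0 ≤ z then 1 else -1) ∘
        (VoteSeq ε h n) := rfl
    rw [this]
    exact (measurable_from_top).comp hWm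
  have hAm : MeasurableSet A := by
    have : A = {x | hPrime ε h n v x = g x}ᶜ := rfl
    rw [this]
    exact (measurableSet_eq_fun hHm hgm).compl
  refine ⟨⟨inc1, inc2⟩, ?_, ?_⟩
  · intro hApos
    rw [ProbabilityTheory.cond_apply hAm, Set.inter_eq_self_of_subset_right inc1,
      ← ENNReal.div_eq_inv_mul]
    exact ENNReal.div_le_div_left
      ((measure_mono inc2).trans (measure_union_le _ _)) _
  · intro hApos hle
    set B := ((Bval ε).toNat : ℝ≥0∞) ^ 4 with hBdef
    have hB1 : (1:ℝ≥0∞) ≤ B := by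
      rw [hBdef]
      exact one_le_pow_of_one_le' (by
        exact_mod_cast Nat.one_le_cast.mpr (by omega : 1 ≤ (Bval ε).toNat)) 4
    have hB0 : B ≠ 0 := by positivity
    have hBtop : B ≠ ⊤ := by
      rw [hBdef]; exact ENNReal.pow_ne_top (ENNReal.natCast_ne_top _)
    have hMle : D Mset ≤ B * D S := by
      have := mul_le_mul_right hle B
      rwa [← mul_assoc, mul_one_div, ENNReal.div_self hB0 hBtop, one_mul] at this
    have hS0 : D S ≠ 0 := by
      intro h0
      rw [h0, mul_zero] at hMle
      have : D A = 0 := le_antisymm (((measure_mono inc2).trans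
        (measure_union_le _ _)).trans (by rw [h0]; simpa using hMle)) (zero_le)
      exact absurd this (by exact_mod_cast hApos.ne')
    have hStop : D S ≠ ⊤ := measure_ne_top D S
    rw [ProbabilityTheory.cond_apply hAm, Set.inter_eq_self_of_subset_right inc1,
      ← ENNReal.div_eq_inv_mul]
    calc 1 / (2 * B) = D S / (2 * B * D S) := by
            rw [← ENNReal.mul_div_mul_right 1 (2*B) hS0 hStop, one_mul]
      _ ≤ D S / (D Mset + D S) := by
            apply ENNReal.div_le_div_left
            calc D Mset + D S ≤ B * D S + D S := add_le_add_left hMle _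
              _ ≤ B * D S + B * D S := by
                    refine add_le_add_right ?_ _
                    nth_rewrite 1 [← one_mul (D S)]
                    exact mul_le_mul_left hB1 _
              _ = 2 * B * D S := by ring
      _ ≤ D S / D A := ENNReal.div_le_div_left
            ((measure_mono inc2).trans (measure_union_le _ _)) _
end
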